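/- arXiv:2012.06379 — 7 statements merged into one kernel-verified Lean document; each statement's English description precedes it below -/
import Mathlib

section
/- For any integer a and natural numbers b, c with c ≤ b, the identity ∏_{d=0}^{b}(a+2d) − Σ_{e=0}^{c} [ ∏_{d=0}^{b−e−1}(a+2d) · ∏_{d=b−e}^{b−1}(a+2d+1) ] = ∏_{d=0}^{b−c−1}(a+2d) · ∏_{d=b−c−1}^{b−1}(a+2d+1) holds. -/
theorem peel_top (m n : ℤ) (h : m ≤ n) (f : ℤ → ℤ) :
    ∏ d ∈ Finset.Icc m n, f d = (∏ d ∈ Finset.Icc m (n-1), f d) * f n := by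
  rw [show Finset.Icc m n = insert n (Finset.Icc m (n-1)) by
    ext x; simp only [Finset.mem_Icc, Finset.mem_insert]; omega]
  rw [Finset.prod_insert (by simp [Finset.mem_Icc]), mul_comm]

theorem peel_bot (m n : ℤ) (h : m ≤ n) (f : ℤ → ℤ) :
    ∏ d ∈ Finset.Icc m n, f d = f m * (∏ d ∈ Finset.Icc (m+1) n, f d) := by
  rw [show Finset.Icc m n = insert m (Finset.Icc (m+1) n) by
    ext x; simp only [Finset.mem_Icc, Finset.mem_insert]; omega]
  rw [Finset.prod_insert (by simp [Finset.mem_Icc])]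

theorem key (a m n : ℤ) (h0 : 0 ≤ m) (hmn : m ≤ n) :
    (∏ d ∈ Finset.Icc (0:ℤ) m, (a+2*d)) * (∏ d ∈ Finset.Icc m n, (a+2*d+1))
    - (∏ d ∈ Finset.Icc (0:ℤ) (m-1), (a+2*d)) * (∏ d ∈ Finset.Icc m n, (a+2*d+1))
    = (∏ d ∈ Finset.Icc (0:ℤ) (m-1), (a+2*d)) * (∏ d ∈ Finset.Icc (m-1) n, (a+2*d+1)) := by
  rw [peel_top 0 m h0, peel_bot (m-1) n (by omega)]
  have : m - 1 + 1 = m := by ring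
  rw [this]
  ring

theorem stmt0 (a : ℤ) (b c : ℕ) (hcb : c ≤ b) :
    (∏ d ∈ Finset.Icc (0 : ℤ) (b : ℤ), (a + 2 * d)) -
      ∑ e ∈ Finset.range (c + 1),
        (∏ d ∈ Finset.Icc (0 : ℤ) ((b : ℤ) - (e : ℤ) - 1), (a + 2 * d)) *
        (∏ d ∈ Finset.Icc ((b : ℤ) - (e : ℤ)) ((b : ℤ) - 1), (a + 2 * d + 1)) =
    (∏ d ∈ Finset.Icc (0 : ℤ) ((b : ℤ) - (c : ℤ) - 1), (a + 2 * d)) *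
      (∏ d ∈ Finset.Icc ((b : ℤ) - (c : ℤ) - 1) ((b : ℤ) - 1), (a + 2 * d + 1)) := by
  induction c with
  | zero =>
      rw [Finset.sum_range_one]
      simp only [Nat.cast_zero, sub_zero]
      rw [Finset.Icc_eq_empty (by omega : ¬ ((b:ℤ) ≤ (b:ℤ) - 1)), Finset.prod_empty, mul_one]
      rw [peel_top 0 (b:ℤ) (by positivity)]
      rw [peel_bot ((b:ℤ)-1) ((b:ℤ)-1) le_rfl,
        Finset.Icc_eq_empty (show ¬((b:ℤ)-1+1 ≤ (b:ℤ)-1) by omega), Finset.prod_empty, mul_one]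
      ring
  | succ c ih =>
      rw [Finset.sum_range_succ, sub_add_eq_sub_sub, ih (by omega)]
      have h := key a ((b:ℤ) - c - 1) ((b:ℤ) - 1) (by
        have : (c:ℤ) + 1 ≤ (b:ℤ) := by exact_mod_cast hcb
        omega) (by omega)
      push_cast
      convert h using 4 <;> ring
end

section
/- Let x be a word over {1,2} with digit sum |x|, written as x = 1^{β_k} 2 1^{β_{k−1}} 2 ⋯ 2 1^{β_0} where k is the number of 2s in x, and define g(x,m) = β_0 + β_1 + ⋯ + β_{m−1} + 2m − 1 for 1 ≤ m ≤ k. If x = α_1 α_2 ⋯ α_A with each α_j ∈ {1,2}, then ∏_{j=1}^{k} g(x,j) = |x|! / [α_A · (α_A + α_{A−1}) · ⋯ · (α_A + ⋯ + α_1)]. -/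
def takeBefore2 : ℕ → List ℕ → List ℕ
  | _, [] => []
  | m, a :: t =>
      if a = 2 then (if m ≤ 1 then [] else a :: takeBefore2 (m - 1) t)
      else a :: takeBefore2 m t

/-- `gval x m` is `g(x,m) = β₀ + ⋯ + β_{m-1} + 2m - 1`, computed as one plus the digit
sum of the part of `x` lying strictly to the right of the `m`-th `2` counted from the right. -/
def gval (x : List ℕ) (m : ℕ) : ℕ := 1 + (takeBefore2 m x.reverse).sum

lemma takeBefore2_cons2 (m : ℕ) (t : List ℕ) :
    takeBefore2 m (2 :: t) = if m ≤ 1 then [] else 2 :: takeBefore2 (m - 1) t := by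
  simp [takeBefore2]

lemma takeBefore2_cons_ne (a m : ℕ) (t : List ℕ) (h : a ≠ 2) :
    takeBefore2 m (a :: t) = a :: takeBefore2 m t := by
  simp [takeBefore2, h]

lemma takeBefore2_append (m : ℕ) (l s : List ℕ) (hm : 1 ≤ m) (h : m ≤ l.count 2) :
    takeBefore2 m (l ++ s) = takeBefore2 m l := by
  induction l generalizing m with
  | nil => simp at h; omega
  | cons b t ih =>
    by_cases hb : b = 2
    · subst hb
      rw [List.count_cons_self] at h
      rw [List.cons_append, takeBefore2_cons2, takeBefore2_cons2]
      by_cases h1 : m ≤ 1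
      · simp [h1]
      · rw [if_neg h1, if_neg h1]
        congr 1
        exact ih (m - 1) (by omega) (by omega)
    · rw [List.count_cons_of_ne hb] at h
      rw [List.cons_append, takeBefore2_cons_ne _ _ _ hb, takeBefore2_cons_ne _ _ _ hb]
      congr 1
      exact ih m hm h

lemma takeBefore2_past (m : ℕ) (l s : List ℕ) (h : l.count 2 < m) :
    takeBefore2 m (l ++ s) = l ++ takeBefore2 (m - l.count 2) s := by
  induction l generalizing m with
  | nil => simp
  | cons b t ih =>
    by_cases hb : b = 2
    · subst hb
      rw [List.count_cons_self] at h
      have h1 : ¬ m ≤ 1 := by omega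
      rw [List.cons_append, takeBefore2_cons2, if_neg h1, List.count_cons_self]
      rw [ih (m - 1) (by omega)]
      have : m - 1 - t.count 2 = m - (t.count 2 + 1) := by omega
      rw [this, List.cons_append]
    · rw [List.count_cons_of_ne hb] at h
      rw [List.cons_append, takeBefore2_cons_ne _ _ _ hb, List.count_cons_of_ne hb,
        ih m h, List.cons_append]

lemma gval_cons (a : ℕ) (x : List ℕ) (j : ℕ) (h1 : 1 ≤ j) (h2 : j ≤ x.count 2) :
    gval (a :: x) j = gval x j := by
  unfold gval
  rw [List.reverse_cons, takeBefore2_append j x.reverse [a] h1 (by simpa using h2)]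

lemma gval_top (x : List ℕ) :
    gval (2 :: x) (x.count 2 + 1) = 1 + x.sum := by
  unfold gval
  rw [List.reverse_cons,
    takeBefore2_past (x.count 2 + 1) x.reverse [2] (by simp)]
  have : x.count 2 + 1 - x.reverse.count 2 = 1 := by simp
  rw [this]
  simp [takeBefore2, List.sum_reverse]

lemma drop_prod_cons (a : ℕ) (x : List ℕ) :
    (∏ i ∈ Finset.range (a :: x).length, (((a :: x).drop i).sum : ℚ)) =
      ((a :: x).sum : ℚ) * ∏ i ∈ Finset.range x.length, ((x.drop i).sum : ℚ) := by
  rw [List.length_cons, Finset.prod_range_succ']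
  simp [mul_comm]

lemma drop_prod_pos (x : List ℕ) (hx : ∀ d ∈ x, d = 1 ∨ d = 2) :
    0 < ∏ i ∈ Finset.range x.length, ((x.drop i).sum : ℚ) := by
  apply Finset.prod_pos
  intro i hi
  rw [Finset.mem_range] at hi
  have hne : x.drop i ≠ [] := by
    intro h
    have := List.drop_eq_nil_iff.mp h
    omega
  have : 0 < (x.drop i).sum := by
    rcases List.exists_mem_of_ne_nil _ hne with ⟨d, hd⟩
    have hd' : d ∈ x := List.mem_of_mem_drop hd
    have : 1 ≤ d := by rcases hx d hd' with h | h <;> omega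
    calc 0 < d := by omega
      _ ≤ (x.drop i).sum := List.single_le_sum (by intros; positivity) d hd
  exact_mod_cast this

theorem stmt4 (x : List ℕ) (hx : ∀ d ∈ x, d = 1 ∨ d = 2) :
    (∏ j ∈ Finset.Icc 1 (x.count 2), (gval x j : ℚ)) =
      (Nat.factorial x.sum : ℚ) /
        ∏ i ∈ Finset.range x.length, ((x.drop i).sum : ℚ) := by
  induction x with
  | nil => simp [Nat.factorial]
  | cons a t ih =>
    have hxt : ∀ d ∈ t, d = 1 ∨ d = 2 := fun d hd => hx d (List.mem_cons_of_mem a hd)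
    have ih' := ih hxt
    have hD : 0 < ∏ i ∈ Finset.range t.length, ((t.drop i).sum : ℚ) := drop_prod_pos t hxt
    have hD' : (∏ i ∈ Finset.range t.length, ((t.drop i).sum : ℚ)) ≠ 0 := ne_of_gt hD
    set D : ℚ := ∏ i ∈ Finset.range t.length, ((t.drop i).sum : ℚ) with hDdef
    set S : ℚ := (t.sum : ℚ) with hSdef
    have hS : 0 ≤ S := by positivity
    rw [drop_prod_cons]
    rcases hx a (List.mem_cons_self (a := a) (l := t)) with ha | ha <;> subst ha
    · have hc : (1 :: t).count 2 = t.count 2 := by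
        rw [List.count_cons_of_ne (by norm_num)]
      rw [hc]
      have heq : (∏ j ∈ Finset.Icc 1 (t.count 2), (gval (1 :: t) j : ℚ)) =
          ∏ j ∈ Finset.Icc 1 (t.count 2), (gval t j : ℚ) := by
        apply Finset.prod_congr rfl
        intro j hj
        rw [Finset.mem_Icc] at hj
        rw [gval_cons 1 t j hj.1 hj.2]
      have hs : (1 :: t).sum = t.sum + 1 := by simp [add_comm]
      rw [heq, ih', hs, Nat.factorial_succ, Nat.cast_mul, Nat.cast_add, Nat.cast_one,
        ← hSdef, mul_div_mul_left _ _ (by positivity : S + 1 ≠ 0)]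
    · have hc : (2 :: t).count 2 = t.count 2 + 1 := List.count_cons_self (a := 2) (l := t)
      rw [hc, Finset.prod_Icc_succ_top (by omega : 1 ≤ t.count 2 + 1)]
      have heq : (∏ j ∈ Finset.Icc 1 (t.count 2), (gval (2 :: t) j : ℚ)) =
          ∏ j ∈ Finset.Icc 1 (t.count 2), (gval t j : ℚ) := by
        apply Finset.prod_congr rfl
        intro j hj
        rw [Finset.mem_Icc] at hj
        rw [gval_cons 2 t j hj.1 hj.2]
      have hs : (2 :: t).sum = t.sum + 2 := by simp [add_comm]
      rw [heq, ih', gval_top, hs]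
      have hf : ((t.sum + 2).factorial : ℚ) = (S + 2) * ((S + 1) * (t.sum.factorial : ℚ)) := by
        rw [show t.sum + 2 = (t.sum + 1) + 1 from rfl, Nat.factorial_succ, Nat.factorial_succ]
        push_cast [← hSdef]
        ring
      have hg : ((1 + t.sum : ℕ) : ℚ) = 1 + S := by push_cast [← hSdef]; ring
      have hg2 : ((t.sum + 2 : ℕ) : ℚ) = S + 2 := by push_cast [← hSdef]; ring
      rw [hf, hg, hg2, ← hDdef, mul_div_mul_left _ _ (by positivity : S + 2 ≠ 0),
        div_mul_eq_mul_div]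
      ring
end

section
/- For natural numbers X, Y, S, i with Y ≥ X ≥ i, define Ξ(X,Y,S,i) = Σ_{Δ ∈ Ω(X,Y,S)} ∏_{j=1}^{S}(e(Δ,j) − i), summing over all nonnegative trajectories from Y to X with S up-steps. Then Ξ(X,Y,S,i) = Ξ(X−i, Y−i, S, 0), where the right side sums over nonnegative trajectories from Y−i to X−i. -/
/-- The heights attained immediately after each up-step of a trajectory
(listed in order of occurrence): `e(Δ,1), …, e(Δ,S)`. -/
def upsList (L : List ℕ) : List ℕ :=
  ((L.zip L.tail).filter (fun p => p.2 == p.1 + 1)).map Prod.snd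

/-- `L` is a ±1-step trajectory (of nonnegative integers) from `Y` to `X`. -/
def IsTraj (Y X : ℕ) (L : List ℕ) : Prop :=
  L.head? = some Y ∧ L.getLast? = some X ∧
    L.Chain' (fun a b => b = a + 1 ∨ a = b + 1)

/-- `Ω(X,Y,S)`: nonnegative ±1-step trajectories from `Y` to `X` with exactly `S` up-steps. -/
def Omega (X Y S : ℕ) : Set (List ℕ) :=
  {L | IsTraj Y X L ∧ (upsList L).length = S}

/-- `Ξ(X,Y,S) = Σ_{Δ ∈ Ω(X,Y,S)} ∏_{j=1}^{S} e(Δ,j)`. -/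
noncomputable def XiZ (X Y S : ℕ) : ℤ :=
  ∑ᶠ L ∈ Omega X Y S, ((upsList L).prod : ℤ)

/-- `Ξ(X,Y,S,i) = Σ_{Δ ∈ Ω(X,Y,S)} ∏_{j=1}^{S} (e(Δ,j) - i)`. -/
noncomputable def Xi (X Y S i : ℕ) : ℤ :=
  ∑ᶠ L ∈ Omega X Y S, ((upsList L).map (fun v => (v : ℤ) - (i : ℤ))).prod

lemma upsList_cons_cons (a b : ℕ) (t : List ℕ) :
    upsList (a :: b :: t) = (if b = a + 1 then [b] else []) ++ upsList (b :: t) := by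
  simp only [upsList, List.zip_cons_cons, List.tail_cons, List.filter_cons]
  split <;> simp_all

lemma mem_of_mem_upsList {e : ℕ} {L : List ℕ} (h : e ∈ upsList L) : e ∈ L := by
  simp only [upsList, List.mem_map, List.mem_filter] at h
  obtain ⟨p, ⟨hp, _⟩, rfl⟩ := h
  exact List.mem_of_mem_tail (List.of_mem_zip hp).2

lemma upsList_map (f : ℕ → ℕ) (L : List ℕ)
    (hf : ∀ a ∈ L, ∀ b ∈ L, (f b = f a + 1 ↔ b = a + 1)) :
    upsList (L.map f) = (upsList L).map f := by
  unfold upsList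
  rw [show (L.map f).tail = L.tail.map f from by cases L <;> simp,
    List.zip_map, List.filter_map, List.map_map, List.map_map]
  rw [List.filter_congr (q := fun p => p.2 == p.1 + 1) ?_]
  · rfl
  · intro p hp
    have h1 := (List.of_mem_zip hp).1
    have h2 := List.mem_of_mem_tail (List.of_mem_zip hp).2
    have := hf _ h1 _ h2
    simp only [Function.comp, Prod.map]
    exact beq_eq_beq.mpr (by simpa using this)

lemma exists_i_mem_upsList (i X : ℕ) (hiX : i ≤ X) :
    ∀ L : List ℕ, L.getLast? = some X →
      L.Chain' (fun a b => b = a + 1 ∨ a = b + 1) →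
      (∃ v ∈ L, v < i) → i ∈ upsList L
  | [] => by simp
  | [a] => by
    intro hl _ hv
    simp only [List.getLast?_singleton, Option.some_inj] at hl
    simp only [List.mem_singleton] at hv
    obtain ⟨v, rfl, hvi⟩ := hv
    omega
  | a :: b :: t => by
    intro hl hc hv
    rw [upsList_cons_cons]
    have hrel : b = a + 1 ∨ a = b + 1 := (List.isChain_cons_cons.mp hc).1
    have hc' := (List.isChain_cons_cons.mp hc).2
    have hl' : (b :: t).getLast? = some X := by
      rwa [List.getLast?_cons_cons] at hl
    by_cases hb : ∃ v ∈ b :: t, v < i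
    · have := exists_i_mem_upsList i X hiX (b :: t) hl' hc' hb
      simp [this]
    · push_neg at hb
      obtain ⟨v, hv, hvi⟩ := hv
      have hva : v = a := by
        rcases List.mem_cons.mp hv with h | h
        · exact h
        · exact absurd hvi (not_lt.mpr (hb v h))
      have hbi : i ≤ b := hb b (by simp)
      have h1 : b = a + 1 := by omega
      have h2 : b = i := by omega
      simp only [if_pos h1, List.singleton_append, List.mem_cons]
      left; omega

lemma chain'_sub (i : ℕ) :
    ∀ L : List ℕ, (∀ v ∈ L, i ≤ v) →
      L.Chain' (fun a b => b = a + 1 ∨ a = b + 1) →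
      (L.map (· - i)).Chain' (fun a b => b = a + 1 ∨ a = b + 1)
  | [] => by simp
  | [a] => by intros; exact List.isChain_singleton _
  | a :: b :: t => by
    intro hg hc
    rw [List.map_cons, List.map_cons]
    show List.IsChain _ _
    rw [List.isChain_cons_cons]
    have hrel := (List.isChain_cons_cons.mp hc).1
    have ha := hg a (by simp)
    have hb := hg b (by simp)
    refine ⟨by omega, ?_⟩
    exact chain'_sub i (b :: t) (fun v hv => hg v (List.mem_cons_of_mem _ hv))
      (List.isChain_cons_cons.mp hc).2

lemma coeList (l : List ℕ) : ((l : List ℤ)) = l.map (fun a : ℕ => (a : ℤ)) := by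
  induction l with
  | nil => rfl
  | cons a t ih =>
    show (a :: t : List ℕ).flatMap _ = _
    simp only [List.flatMap_cons, List.map_cons]
    rw [← ih]
    rfl

theorem stmt8 (X Y S i : ℕ) (hiX : i ≤ X) (hXY : X ≤ Y) :
    Xi X Y S i = Xi (X - i) (Y - i) S 0 := by
  have hiY : i ≤ Y := le_trans hiX hXY
  set f : List ℕ → ℤ := fun L => ((upsList L).map (fun v => (v : ℤ) - (i : ℤ))).prod with hf
  set g : List ℕ → ℤ := fun L => ((upsList L).map (fun v => (v : ℤ) - ((0 : ℕ) : ℤ))).prod with hg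
  set s : Set (List ℕ) := Omega X Y S ∩ {L : List ℕ | ∀ v ∈ L, i ≤ v} with hs
  have hinv : ∀ L : List ℕ, (∀ v ∈ L, i ≤ v) →
      List.map (· + i) (List.map (· - i) L) = L := by
    intro L hL
    rw [List.map_map]
    have : L.map ((· + i) ∘ (· - i)) = L.map id := by
      apply List.map_congr_left
      intro a ha
      have := hL a ha
      simp only [Function.comp, id]
      omega
    rw [this, List.map_id]
  have step1 : Xi X Y S i = ∑ᶠ L ∈ s, f L := by
    unfold Xi
    apply finsum_mem_inter_support_eq'
    intro L hL
    constructor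
    · intro hΩ
      refine ⟨hΩ, fun v hv => ?_⟩
      by_contra hvi
      push_neg at hvi
      have hmem : i ∈ upsList L :=
        exists_i_mem_upsList i X hiX L hΩ.1.2.1 hΩ.1.2.2 ⟨v, hv, hvi⟩
      apply hL
      apply List.prod_eq_zero
      rw [coeList, List.map_map]
      exact List.mem_map.mpr ⟨i, hmem, by simp⟩
    · exact fun h => h.1
  have step2 : ∑ᶠ L ∈ s, f L = ∑ᶠ M ∈ Omega (X - i) (Y - i) S, g M := by
    apply finsum_mem_eq_of_bijOn (List.map (· - i))
    · refine ⟨?_, ?_, ?_⟩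
      · -- MapsTo
        rintro L ⟨⟨⟨hhead, hlast, hchain⟩, hlen⟩, hge⟩
        have hups : upsList (L.map (· - i)) = (upsList L).map (· - i) := by
          apply upsList_map
          intro a ha b hb
          have := hge a ha; have := hge b hb
          omega
        refine ⟨⟨?_, ?_, chain'_sub i L hge hchain⟩, ?_⟩
        · rw [List.head?_map, hhead]; rfl
        · rw [List.getLast?_map, hlast]; rfl
        · rw [hups, List.length_map, hlen]
      · -- InjOn
        rintro L1 ⟨_, h1⟩ L2 ⟨_, h2⟩ heq
        rw [← hinv L1 h1, ← hinv L2 h2, heq]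
      · -- SurjOn
        rintro M ⟨⟨hhead, hlast, hchain⟩, hlen⟩
        have hups : upsList (M.map (· + i)) = (upsList M).map (· + i) := by
          apply upsList_map
          intro a _ b _
          omega
        refine ⟨M.map (· + i), ⟨⟨⟨?_, ?_, ?_⟩, ?_⟩, ?_⟩, ?_⟩
        · rw [List.head?_map, hhead]
          simp [Nat.sub_add_cancel hiY]
        · rw [List.getLast?_map, hlast]
          simp [Nat.sub_add_cancel hiX]
        · show List.IsChain _ _
          rw [List.isChain_map]
          exact hchain.imp (fun a b h => by omega)
        · rw [hups, List.length_map, hlen]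
        · intro v hv
          simp only [List.mem_map] at hv
          obtain ⟨m, _, rfl⟩ := hv
          omega
        · rw [List.map_map]
          have : M.map ((· - i) ∘ (· + i)) = M.map id := by
            apply List.map_congr_left
            intro a _
            simp only [Function.comp, id]
            omega
          rw [this, List.map_id]
    · -- values agree
      rintro L ⟨_, hge⟩
      have hups : upsList (L.map (· - i)) = (upsList L).map (· - i) := by
        apply upsList_map
        intro a ha b hb
        have := hge a ha; have := hge b hb
        omega
      simp only [hf, hg, coeList, hups, List.map_map]
      apply congrArg List.prod
      apply List.map_congr_left
      intro a ha
      have := hge a (mem_of_mem_upsList ha)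
      simp only [Function.comp]
      push_cast
      omega
  rw [step1, step2]
  unfold Xi
  rfl
end

section
/- Define Ξ(X,Y,S) = Σ_{Δ ∈ Ω(X,Y,S)} ∏_{j=1}^{S} e(Δ,j), where Ω(X,Y,S) is the set of nonnegative ±1-step trajectories from Y to X with exactly S up-steps and e(Δ,j) is the height after the j-th up-step. Then for X ≥ 2 and S ≥ 1: Ξ(X,Y,S) = Ξ(X−1,Y,S) − (X−1)·Ξ(X−2,Y,S−1). -/
lemma zip_tail_concat : ∀ (L : List ℕ) (b a : ℕ), L.getLast? = some b →
    (L ++ [a]).zip (L ++ [a]).tail = L.zip L.tail ++ [(b, a)]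
  | [], b, a, h => by simp at h
  | [x], b, a, h => by simp_all
  | (x :: y :: ys), b, a, h => by
    have ih := zip_tail_concat (y :: ys) b a (by simpa using h)
    simp only [List.cons_append, List.zip_cons_cons, List.tail_cons] at ih ⊢
    rw [ih]

lemma upsList_concat (L : List ℕ) (b a : ℕ) (h : L.getLast? = some b) :
    upsList (L ++ [a]) = upsList L ++ (if a = b + 1 then [a] else []) := by
  unfold upsList
  rw [zip_tail_concat L b a h, List.filter_append, List.map_append]
  by_cases hab : a = b + 1 <;> simp [hab]

lemma upsList_cons (x : ℕ) (L : List ℕ) (v : ℕ) (hh : L.head? = some v) :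
    upsList (x :: L) = (if v = x + 1 then [v] else []) ++ upsList L := by
  cases L with
  | nil => simp at hh
  | cons y ys =>
    simp only [List.head?_cons, Option.some_inj] at hh
    subst hh
    unfold upsList
    by_cases hx : y = x + 1 <;> simp [hx]

lemma traj_bound : ∀ (L : List ℕ) (Y X : ℕ), L.head? = some Y → L.getLast? = some X →
    L.Chain' (fun a b => b = a + 1 ∨ a = b + 1) →
    L.length + X ≤ Y + 2 * (upsList L).length + 1 ∧ ∀ z ∈ L, z ≤ Y + (upsList L).length
  | [], Y, X, hh, hl, hc => by simp at hh
  | [x], Y, X, hh, hl, hc => by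
    simp only [List.head?_cons, Option.some_inj] at hh
    simp only [List.getLast?_singleton, Option.some_inj] at hl
    subst hh; subst hl
    refine ⟨by simp [upsList]; omega, by simp [upsList]⟩
  | (x :: y :: ys), Y, X, hh, hl, hc => by
    simp only [List.head?_cons, Option.some_inj] at hh
    subst hh
    replace hc := List.isChain_cons_cons.mp hc
    obtain ⟨hr, hc⟩ := hc
    obtain ⟨ih1, ih2⟩ := traj_bound (y :: ys) y X rfl (by simpa using hl) hc
    rcases hr with hr | hr
    · have hu : (upsList (x :: y :: ys)).length = (upsList (y :: ys)).length + 1 := by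
        rw [upsList_cons x (y :: ys) y rfl, if_pos hr]; simp
      refine ⟨by simp only [List.length_cons] at *; omega, ?_⟩
      intro z hz
      rcases List.mem_cons.mp hz with rfl | hz
      · omega
      · have := ih2 z hz; omega
    · have hu : (upsList (x :: y :: ys)).length = (upsList (y :: ys)).length := by
        rw [upsList_cons x (y :: ys) y rfl, if_neg (by omega)]; simp
      refine ⟨by simp only [List.length_cons] at *; omega, ?_⟩
      intro z hz
      rcases List.mem_cons.mp hz with rfl | hz
      · omega
      · have := ih2 z hz; omega

lemma omega_finite (X Y S : ℕ) : (Omega X Y S).Finite := by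
  have hsub : Omega X Y S ⊆ (List.map (Fin.val : Fin (Y + S + 1) → ℕ)) ''
      {l : List (Fin (Y + S + 1)) | l.length ≤ Y + 2 * S + 1} := by
    rintro L ⟨⟨hh, hl, hc⟩, hcount⟩
    obtain ⟨h1, h2⟩ := traj_bound L Y X hh hl hc
    rw [hcount] at h1 h2
    refine ⟨L.pmap (fun z hz => (⟨z, hz⟩ : Fin (Y + S + 1)))
      (fun z hz => by have := h2 z hz; omega), ?_, ?_⟩
    · simp only [Set.mem_setOf_eq, List.length_pmap]; omega
    · rw [List.map_pmap]; simp
  exact ((List.finite_length_le (Fin (Y + S + 1)) (Y + 2 * S + 1)).image _).subset hsub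

lemma omega_ne_nil {X Y S : ℕ} {L : List ℕ} (h : L ∈ Omega X Y S) : L ≠ [] := by
  rintro rfl; exact (by simpa using h.1.1)

lemma concat_mem_down {X Y S : ℕ} (hX : 1 ≤ X) {L : List ℕ} (h : L ∈ Omega X Y S) :
    L ++ [X - 1] ∈ Omega (X - 1) Y S := by
  obtain ⟨⟨hh, hl, hc⟩, hcount⟩ := h
  have hne : L ≠ [] := by rintro rfl; simp at hh
  refine ⟨⟨?_, ?_, ?_⟩, ?_⟩
  · rw [List.head?_append_of_ne_nil _ hne]; exact hh
  · exact List.getLast?_concat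
  · refine List.isChain_append.mpr ?_
    refine ⟨hc, List.isChain_singleton _, ?_⟩
    intro x hx y hy
    rw [hl] at hx
    simp only [Option.mem_def, Option.some_inj, List.head?_cons] at hx hy
    subst hx; subst hy
    right; omega
  · rw [upsList_concat L X (X - 1) hl, if_neg (by omega)]
    simpa using hcount

lemma concat_mem_up {X Y S : ℕ} (hX : 2 ≤ X) (hS : 1 ≤ S) {L : List ℕ}
    (h : L ∈ Omega (X - 2) Y (S - 1)) : L ++ [X - 1] ∈ Omega (X - 1) Y S := by
  obtain ⟨⟨hh, hl, hc⟩, hcount⟩ := h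
  have hne : L ≠ [] := by rintro rfl; simp at hh
  refine ⟨⟨?_, ?_, ?_⟩, ?_⟩
  · rw [List.head?_append_of_ne_nil _ hne]; exact hh
  · exact List.getLast?_concat
  · refine List.isChain_append.mpr ?_
    refine ⟨hc, List.isChain_singleton _, ?_⟩
    intro x hx y hy
    rw [hl] at hx
    simp only [Option.mem_def, Option.some_inj, List.head?_cons] at hx hy
    subst hx; subst hy
    left; omega
  · rw [upsList_concat L (X - 2) (X - 1) hl, if_pos (by omega)]
    simp [hcount]; omega

lemma omega_split {X Y S : ℕ} (hX : 2 ≤ X) (hS : 1 ≤ S) (hXY : X ≤ Y) :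
    Omega (X - 1) Y S =
      ((· ++ [X - 1]) '' Omega X Y S) ∪ ((· ++ [X - 1]) '' Omega (X - 2) Y (S - 1)) := by
  ext M
  constructor
  · rintro ⟨⟨hh, hl, hc⟩, hcount⟩
    have hne : M ≠ [] := by rintro rfl; simp at hh
    have hdne : M.dropLast ≠ [] := by
      intro hd
      have : M = [M.getLast hne] := by
        conv_lhs => rw [← List.dropLast_append_getLast hne]
        rw [hd]; simp
      rw [this] at hh hl
      simp only [List.head?_cons, List.getLast?_singleton, Option.some_inj] at hh hl
      omega
    set L := M.dropLast with hL
    have hM : L ++ [X - 1] = M := by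
      have := List.dropLast_append_getLast hne
      have hg : M.getLast hne = X - 1 := by
        have := List.getLast?_eq_getLast hne
        rw [hl] at this; exact (Option.some_inj.mp this.symm)
      rw [hg] at this; exact this
    have hlL : L.getLast? = some (L.getLast hdne) := List.getLast?_eq_getLast hdne
    have hhL : L.head? = some Y := by
      rw [← hM, List.head?_append_of_ne_nil _ hdne] at hh; exact hh
    have hcL : L.Chain' (fun a b => b = a + 1 ∨ a = b + 1) ∧
        ((X - 1 : ℕ) = L.getLast hdne + 1 ∨ L.getLast hdne = (X - 1) + 1) := by
      rw [← hM] at hc; replace hc := List.isChain_append.mp hc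
      refine ⟨hc.1, ?_⟩
      have := hc.2.2 (L.getLast hdne) (by rw [hlL]; rfl) (X - 1) rfl
      exact this
    obtain ⟨hcL, hrel⟩ := hcL
    have hups : upsList M = upsList L ++ (if (X-1) = L.getLast hdne + 1 then [X-1] else []) := by
      rw [← hM, upsList_concat L (L.getLast hdne) (X - 1) hlL]
    rcases hrel with hr | hr
    · -- up-step: getLast L = X - 2
      right
      refine ⟨L, ⟨⟨hhL, ?_, hcL⟩, ?_⟩, hM⟩
      · rw [hlL]; congr 1; omega
      · rw [hups, if_pos hr] at hcount
        simp at hcount; omega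
    · -- down-step: getLast L = X
      left
      refine ⟨L, ⟨⟨hhL, ?_, hcL⟩, ?_⟩, hM⟩
      · rw [hlL]; congr 1; omega
      · rw [hups, if_neg (by omega)] at hcount
        simpa using hcount
  · rintro (⟨L, hL, rfl⟩ | ⟨L, hL, rfl⟩)
    · exact concat_mem_down (by omega) hL
    · exact concat_mem_up hX hS hL

theorem stmt10 (X Y S : ℕ) (hX : 2 ≤ X) (hS : 1 ≤ S) (hXY : X ≤ Y) :
    XiZ X Y S = XiZ (X - 1) Y S - (X - 1 : ℕ) * XiZ (X - 2) Y (S - 1) := by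
  have hdisj : Disjoint ((· ++ [X - 1]) '' Omega X Y S)
      ((· ++ [X - 1]) '' Omega (X - 2) Y (S - 1)) := by
    rw [Set.disjoint_left]
    rintro M ⟨L₁, h₁, rfl⟩ ⟨L₂, h₂, heq⟩
    have hL : L₂ = L₁ := List.append_cancel_right heq
    subst hL
    have e1 := h₁.1.2.1
    have e2 := h₂.1.2.1
    rw [e1] at e2
    have : X = X - 2 := Option.some_inj.mp e2
    omega
  have hinj : Function.Injective (· ++ [X - 1] : List ℕ → List ℕ) :=
    fun a b h => List.append_cancel_right h
  have hfin1 := omega_finite X Y S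
  have hfin2 := omega_finite (X - 2) Y (S - 1)
  have key : XiZ (X - 1) Y S =
      XiZ X Y S + (X - 1 : ℕ) * XiZ (X - 2) Y (S - 1) := by
    rw [XiZ, omega_split hX hS hXY,
      finsum_mem_union hdisj (hfin1.image _) (hfin2.image _),
      finsum_mem_image (hinj.injOn), finsum_mem_image (hinj.injOn)]
    congr 1
    · rw [XiZ]
      apply finsum_mem_congr rfl
      intro L hL
      rw [upsList_concat L X (X - 1) hL.1.2.1, if_neg (by omega)]
      simp
    · rw [XiZ]
      have step : ∀ L ∈ Omega (X - 2) Y (S - 1),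
          ((upsList (L ++ [X - 1])).prod : ℤ) = (X - 1 : ℕ) * ((upsList L).prod : ℤ) := by
        intro L hL
        rw [upsList_concat L (X - 2) (X - 1) hL.1.2.1, if_pos (by omega)]
        rw [List.prod_append, List.prod_singleton, Nat.cast_mul]
        ring
      rw [finsum_mem_congr rfl step]
      rw [← Set.Finite.coe_toFinset hfin2, finsum_mem_coe_finset, finsum_mem_coe_finset,
        Finset.mul_sum]
  linarith [key]
end

section
/- For natural numbers X, Y, S with Y ≥ X, and m = min(⌊X/2⌋, S), the identity Ξ(X,Y,S) = Σ_{i=0}^{m} (−1)^i · C(X, 2i) · (2i−1)!! · Ξ(0,Y,S−i) holds, where Ξ(X,Y,S) = Σ_{Δ ∈ Ω(X,Y,S)} ∏_{j=1}^{S} e(Δ,j) and (−1)!! = 1. -/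
lemma front {X Y S : ℕ} {L : List ℕ} (h : L ∈ Omega X Y S) :
    (L = [Y] ∧ X = Y ∧ S = 0) ∨
    (∃ t S', L = Y :: (Y + 1) :: t ∧ S = S' + 1 ∧ ((Y + 1) :: t) ∈ Omega X (Y + 1) S') ∨
    (∃ t Y', Y = Y' + 1 ∧ L = Y :: Y' :: t ∧ (Y' :: t) ∈ Omega X Y' S) := by
  obtain ⟨⟨hh, hl, hc⟩, hu⟩ := h
  match L with
  | [] => simp at hh
  | [a] =>
    simp at hh hl hu
    subst hh hl
    exact Or.inl ⟨rfl, rfl, hu.symm⟩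
  | a :: b :: t =>
    have ha : a = Y := by simpa using hh
    unfold List.Chain' at hc
    rw [List.isChain_cons_cons] at hc
    have hl' : (b :: t).getLast? = some X := by
      rwa [List.getLast?_cons_cons] at hl
    rcases hc.1 with hb | hb
    · right; left
      rw [ha] at hb
      subst hb ha
      rw [upsList_cons_cons] at hu
      simp at hu
      refine ⟨t, (upsList ((a + 1) :: t)).length, rfl, by omega, ⟨⟨rfl, hl', hc.2⟩, rfl⟩⟩
    · right; right
      rw [ha] at hb
      refine ⟨t, b, hb, by rw [ha], ⟨⟨rfl, hl', hc.2⟩, ?_⟩⟩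
      rw [upsList_cons_cons] at hu
      have hne : ¬ (b = a + 1) := by omega
      simpa [hne] using hu

lemma omega_le {X Y S : ℕ} {L : List ℕ} (h : L ∈ Omega X Y S) : X ≤ Y + S := by
  induction L generalizing Y S with
  | nil => exact absurd h.1.1 (by simp)
  | cons a t ih =>
    rcases front h with ⟨h1, h2, h3⟩ | ⟨t', S', he, hS, hm⟩ | ⟨t', Y', hY, he, hm⟩
    · omega
    · obtain ⟨rfl, rfl⟩ : a = Y ∧ t = (Y + 1) :: t' := by
        constructor <;> [exact (List.cons.injEq .. ▸ he).1; exact (List.cons.injEq .. ▸ he).2]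
      have := ih hm
      omega
    · obtain ⟨rfl, rfl⟩ : a = Y ∧ t = Y' :: t' := by
        constructor <;> [exact (List.cons.injEq .. ▸ he).1; exact (List.cons.injEq .. ▸ he).2]
      have := ih hm
      omega

lemma upsList_append {t : List ℕ} {a : ℕ} (x : ℕ) (h : t.getLast? = some a) :
    upsList (t ++ [x]) = upsList t ++ (if x = a + 1 then [x] else []) := by
  induction t with
  | nil => simp at h
  | cons b t ih =>
    cases t with
    | nil =>
      simp at h
      subst h
      by_cases hx : x = b + 1 <;> simp [upsList, hx]
    | cons c t2 =>
      have h' : (c :: t2).getLast? = some a := by rwa [List.getLast?_cons_cons] at h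
      rw [List.cons_append, List.cons_append, upsList_cons_cons, ← List.cons_append,
        ih h', upsList_cons_cons, List.append_assoc]

lemma mem_append_up {X Y S : ℕ} {t : List ℕ} (h : t ∈ Omega X Y S) :
    t ++ [X + 1] ∈ Omega (X + 1) Y (S + 1) := by
  obtain ⟨⟨hh, hl, hc⟩, hu⟩ := h
  have hne : t ≠ [] := by rintro rfl; simp at hh
  refine ⟨⟨?_, ?_, ?_⟩, ?_⟩
  · rwa [List.head?_append_of_ne_nil]
    exact hne
  · simp
  · unfold List.Chain'
    rw [List.isChain_append]
    refine ⟨hc, List.isChain_singleton _, fun x hx y hy => ?_⟩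
    simp at hy
    subst hy
    rw [hl] at hx
    simp at hx
    subst hx
    left; rfl
  · rw [upsList_append (X + 1) hl]
    simp [hu]

lemma mem_append_down {X Y S : ℕ} {t : List ℕ} (h : t ∈ Omega (X + 1) Y S) :
    t ++ [X] ∈ Omega X Y S := by
  obtain ⟨⟨hh, hl, hc⟩, hu⟩ := h
  have hne : t ≠ [] := by rintro rfl; simp at hh
  refine ⟨⟨?_, ?_, ?_⟩, ?_⟩
  · rwa [List.head?_append_of_ne_nil]
    exact hne
  · simp
  · unfold List.Chain'
    rw [List.isChain_append]
    refine ⟨hc, List.isChain_singleton _, fun x hx y hy => ?_⟩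
    simp at hy
    subst hy
    rw [hl] at hx
    simp at hx
    subst hx
    right; rfl
  · rw [upsList_append X hl]
    have : ¬ (X = X + 1 + 1) := by omega
    simp [this, hu]

lemma back {X Y S : ℕ} {L : List ℕ} (h : L ∈ Omega X Y S) :
    (L = [X] ∧ X = Y ∧ S = 0) ∨
    (∃ t X' S', X = X' + 1 ∧ S = S' + 1 ∧ L = t ++ [X] ∧ t ∈ Omega X' Y S') ∨
    (∃ t, L = t ++ [X] ∧ t ∈ Omega (X + 1) Y S) := by
  obtain ⟨⟨hh, hl, hc⟩, hu⟩ := h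
  rcases L.eq_nil_or_concat' with rfl | ⟨t, b, rfl⟩
  · simp at hh
  · have hb : b = X := by simpa using hl
    subst hb
    rcases t.eq_nil_or_concat' with rfl | ⟨t2, a, rfl⟩
    · left
      simp at hh hu
      refine ⟨rfl, by omega, ?_⟩
      rw [← hu]
      rfl
    · have hta : (t2 ++ [a]).getLast? = some a := by simp
      have hh' : (t2 ++ [a]).head? = some Y := by
        rwa [List.head?_append_of_ne_nil] at hh
        simp
      unfold List.Chain' at hc
      rw [List.isChain_append] at hc
      have hrel := hc.2.2 a (by simp) b (by simp)
      rw [upsList_append b hta] at hu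
      rcases hrel with hr | hr
      · right; left
        refine ⟨t2 ++ [a], a, (upsList (t2 ++ [a])).length, hr, ?_, rfl,
          ⟨⟨hh', hta, hc.1⟩, rfl⟩⟩
        rw [← hu]
        simp [hr]
      · right; right
        have hrx : ¬ (b = a + 1) := by omega
        refine ⟨t2 ++ [a], rfl, ⟨⟨hh', ?_, hc.1⟩, ?_⟩⟩
        · rw [hta, hr]
        · rw [← hu]
          simp [hrx]

lemma omega_succ_succ (X Y S : ℕ) :
    Omega (X + 1) Y (S + 1) =
      (fun t => t ++ [X + 1]) '' Omega X Y S ∪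
        (fun t => t ++ [X + 1]) '' Omega (X + 2) Y (S + 1) := by
  ext L
  constructor
  · intro h
    rcases back h with ⟨_, _, hS⟩ | ⟨t, X', S', hX, hS, he, hm⟩ | ⟨t, he, hm⟩
    · omega
    · left
      obtain rfl : X' = X := by omega
      obtain rfl : S' = S := by omega
      exact ⟨t, hm, he.symm⟩
    · right
      exact ⟨t, hm, he.symm⟩
  · rintro (⟨t, hm, rfl⟩ | ⟨t, hm, rfl⟩)
    · exact mem_append_up hm
    · exact mem_append_down hm

lemma omega_zero_succ (Y S : ℕ) :
    Omega 0 Y (S + 1) = (fun t => t ++ [0]) '' Omega 1 Y (S + 1) := by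
  ext L
  constructor
  · intro h
    rcases back h with ⟨_, _, hS⟩ | ⟨t, X', S', hX, hS, he, hm⟩ | ⟨t, he, hm⟩
    · omega
    · omega
    · exact ⟨t, hm, he.symm⟩
  · rintro ⟨t, hm, rfl⟩
    exact mem_append_down hm

lemma omega_last {X Y S : ℕ} {L : List ℕ} (h : L ∈ Omega X Y S) :
    L.getLast? = some X := h.1.2.1

lemma finsum_mem_mul_const {α : Type*} {s : Set α} (hs : s.Finite) (r : ℤ) (f : α → ℤ) :
    ∑ᶠ i ∈ s, r * f i = r * ∑ᶠ i ∈ s, f i := by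
  rw [← hs.coe_toFinset, finsum_mem_coe_finset, finsum_mem_coe_finset, Finset.mul_sum]

lemma xiZ_rec (X Y S : ℕ) :
    XiZ (X + 1) Y (S + 1) = (X + 1) * XiZ X Y S + XiZ (X + 2) Y (S + 1) := by
  have hdisj : Disjoint ((fun t => t ++ [X + 1]) '' Omega X Y S)
      ((fun t => t ++ [X + 1]) '' Omega (X + 2) Y (S + 1)) := by
    rw [Set.disjoint_left]
    rintro L ⟨t1, h1, rfl⟩ ⟨t2, h2, he⟩
    have : t2 = t1 := by
      have := List.append_left_injective [X + 1] he
      exact this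
    subst this
    have e1 := omega_last h1
    have e2 := omega_last h2
    rw [e1] at e2
    simp at e2
  rw [XiZ, omega_succ_succ,
    finsum_mem_union hdisj ((omega_finite X Y S).image _)
      ((omega_finite (X + 2) Y (S + 1)).image _),
    finsum_mem_image (fun a ha b hb he => List.append_left_injective [X + 1] he),
    finsum_mem_image (fun a ha b hb he => List.append_left_injective [X + 1] he)]
  congr 1
  · rw [XiZ, ← finsum_mem_mul_const (omega_finite X Y S)]
    apply finsum_mem_congr rfl
    intro L hL
    rw [upsList_append (X + 1) (omega_last hL)]
    rw [if_pos rfl]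
    push_cast [List.prod_append]
    simp
    ring

  · rw [XiZ]
    apply finsum_mem_congr rfl
    intro L hL
    rw [upsList_append (X + 1) (omega_last hL)]
    have : ¬ (X + 1 = X + 2 + 1) := by omega
    simp [this]

lemma xiZ_zero_rec (Y S : ℕ) : XiZ 0 Y (S + 1) = XiZ 1 Y (S + 1) := by
  rw [XiZ, omega_zero_succ,
    finsum_mem_image (fun a ha b hb he => List.append_left_injective [0] he), XiZ]
  apply finsum_mem_congr rfl
  intro L hL
  rw [upsList_append 0 (omega_last hL)]
  simp

lemma upsList_cons_of_head {t : List ℕ} {a : ℕ} (h : t.head? = some a) (x : ℕ)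
    (hx : ¬ a = x + 1) : upsList (x :: t) = upsList t := by
  cases t with
  | nil => simp at h
  | cons b t2 =>
    have hb : b = a := by simpa using h
    subst hb
    rw [upsList_cons_cons, if_neg hx]
    rfl

lemma mem_cons_down {X Y S : ℕ} {t : List ℕ} (h : t ∈ Omega X Y S) :
    (Y + 1) :: t ∈ Omega X (Y + 1) S := by
  obtain ⟨⟨hh, hl, hc⟩, hu⟩ := h
  have hne : t ≠ [] := by rintro rfl; simp at hh
  refine ⟨⟨rfl, ?_, ?_⟩, ?_⟩
  · obtain ⟨b, t2, rfl⟩ : ∃ b t2, t = b :: t2 := by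
      cases t with
      | nil => exact absurd rfl hne
      | cons b t2 => exact ⟨b, t2, rfl⟩
    rwa [List.getLast?_cons_cons]
  · unfold List.Chain'
    rw [List.isChain_cons]
    refine ⟨fun y hy => ?_, hc⟩
    rw [hh] at hy
    simp at hy
    subst hy
    right; rfl
  · rw [upsList_cons_of_head hh (Y + 1) (by omega)]
    exact hu

lemma omega_self_zero (Y : ℕ) : Omega Y Y 0 = {[Y]} := by
  ext L
  constructor
  · intro hL
    rcases front hL with ⟨h1, _, _⟩ | ⟨t, S', _, hS, _⟩ | ⟨t, Y', hY, he, hm⟩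
    · exact h1
    · omega
    · have := omega_le hm
      omega
  · rintro rfl
    exact ⟨⟨rfl, rfl, List.isChain_singleton _⟩, rfl⟩

lemma omega_zero_down {X Y : ℕ} (h : X ≤ Y) :
    Omega X (Y + 1) 0 = (List.cons (Y + 1)) '' Omega X Y 0 := by
  ext L
  constructor
  · intro hL
    rcases front hL with ⟨_, hXY, _⟩ | ⟨t, S', _, hS, _⟩ | ⟨t, Y', hY, he, hm⟩
    · omega
    · omega
    · have hYY : Y' = Y := by omega
      subst hYY
      exact ⟨Y' :: t, hm, he.symm⟩
  · rintro ⟨t, hm, rfl⟩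
    exact mem_cons_down hm

lemma xiZ_zero {X Y : ℕ} (h : X ≤ Y) : XiZ X Y 0 = 1 := by
  induction Y with
  | zero =>
    obtain rfl : X = 0 := by omega
    rw [XiZ, omega_self_zero, finsum_mem_singleton]
    rfl
  | succ Y ih =>
    rcases Nat.lt_or_ge X (Y + 1) with hlt | hge
    · have hXY : X ≤ Y := by omega
      rw [XiZ, omega_zero_down hXY,
        finsum_mem_image (fun a ha b hb he => by injection he)]
      rw [← ih hXY, XiZ]
      apply finsum_mem_congr rfl
      intro L hL
      rw [upsList_cons_of_head hL.1.1 (Y + 1) (by omega)]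
    · obtain rfl : X = Y + 1 := by omega
      rw [XiZ, omega_self_zero, finsum_mem_singleton]
      rfl

noncomputable def Fe (X Y S : ℕ) : ℤ :=
  ∑ i ∈ Finset.range (S + 1),
    (-1 : ℤ) ^ i * (Nat.choose X (2 * i) : ℤ) *
      (Nat.doubleFactorial (2 * i - 1) : ℤ) * XiZ 0 Y (S - i)

lemma Fe_zero (Y S : ℕ) : Fe 0 Y S = XiZ 0 Y S := by
  rw [Fe, Finset.sum_eq_single_of_mem 0 (by simp)]
  · simp
  · intro i hi hne
    have h2 : 2 * i > 0 := by omega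
    rw [Nat.choose_eq_zero_of_lt (by omega)]
    simp

lemma Fe_one (Y S : ℕ) : Fe 1 Y S = XiZ 0 Y S := by
  rw [Fe, Finset.sum_eq_single_of_mem 0 (by simp)]
  · simp
  · intro i hi hne
    rw [Nat.choose_eq_zero_of_lt (by omega)]
    simp

lemma Fe_S0 {X Y : ℕ} (h : X ≤ Y) : Fe X Y 0 = 1 := by
  rw [Fe]
  simp [xiZ_zero (Nat.zero_le Y)]

lemma Fe_rec (n Y S : ℕ) :
    Fe (n + 1) Y (S + 1) = (n + 1 : ℤ) * Fe n Y S + Fe (n + 2) Y (S + 1) := by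
  rw [Fe, Fe, Fe, Finset.mul_sum,
    Finset.sum_range_succ' (fun i => (-1 : ℤ) ^ i * (Nat.choose (n + 1) (2 * i) : ℤ) *
      (Nat.doubleFactorial (2 * i - 1) : ℤ) * XiZ 0 Y (S + 1 - i)) (S + 1),
    Finset.sum_range_succ' (fun i => (-1 : ℤ) ^ i * (Nat.choose (n + 2) (2 * i) : ℤ) *
      (Nat.doubleFactorial (2 * i - 1) : ℤ) * XiZ 0 Y (S + 1 - i)) (S + 1),
    ← add_assoc]
  norm_num [Nat.doubleFactorial]
  rw [← Finset.sum_add_distrib]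
  apply Finset.sum_congr rfl
  intro i hi
  have key : ((n : ℤ) + 1) * (Nat.choose n (2 * i) : ℤ) * (Nat.doubleFactorial (2 * i - 1) : ℤ)
      = (Nat.choose (n + 1) (2 * i + 1) : ℤ) * (Nat.doubleFactorial (2 * i + 1) : ℤ) := by
    have h1 : (n + 1) * Nat.choose n (2 * i) = Nat.choose (n + 1) (2 * i + 1) * (2 * i + 1) :=
      Nat.add_one_mul_choose_eq n (2 * i)
    have h2 : Nat.doubleFactorial (2 * i + 1) = (2 * i + 1) * Nat.doubleFactorial (2 * i - 1) :=
      Nat.doubleFactorial_add_one (2 * i)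
    have h1' : ((n : ℤ) + 1) * (Nat.choose n (2 * i) : ℤ)
        = (Nat.choose (n + 1) (2 * i + 1) : ℤ) * (2 * (i : ℤ) + 1) := by exact_mod_cast h1
    push_cast [h2]
    linear_combination ((Nat.doubleFactorial (2 * i - 1) : ℤ)) * h1'
  have hch : (Nat.choose (n + 2) (2 * (i + 1)) : ℤ)
      = (Nat.choose (n + 1) (2 * i + 1) : ℤ) + (Nat.choose (n + 1) (2 * (i + 1)) : ℤ) := by
    have := Nat.choose_succ_succ (n + 1) (2 * i + 1)
    have h3 : 2 * (i + 1) = (2 * i + 1) + 1 := by ring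
    rw [h3]
    push_cast [this]
    ring
  have hsub : S + 1 - (i + 1) = S - i := by omega
  have hdf : (2 * (i + 1) - 1) = 2 * i + 1 := by omega
  rw [hsub, hdf, hch]
  linear_combination (-((-1 : ℤ) ^ i * XiZ 0 Y (S - i))) * key

lemma xiZ_eq_Fe (X : ℕ) : ∀ Y, X ≤ Y → ∀ S, XiZ X Y S = Fe X Y S := by
  induction X using Nat.strong_induction_on with
  | _ X ih =>
    match X, ih with
    | 0, _ =>
      intro Y _ S
      exact (Fe_zero Y S).symm
    | 1, _ =>
      intro Y h S
      cases S with
      | zero => rw [xiZ_zero h, Fe_S0 h]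
      | succ S => rw [Fe_one]; exact (xiZ_zero_rec Y S).symm
    | (n + 2), ih =>
      intro Y h S
      cases S with
      | zero => rw [xiZ_zero h, Fe_S0 h]
      | succ S =>
        have hr := xiZ_rec n Y S
        rw [ih (n + 1) (by omega) Y (by omega) (S + 1), ih n (by omega) Y (by omega) S] at hr
        have hf := Fe_rec n Y S
        push_cast at hr hf ⊢
        linarith [hr, hf]

theorem stmt15 (X Y S : ℕ) (hXY : X ≤ Y) :
    XiZ X Y S =
      ∑ i ∈ Finset.range (min (X / 2) S + 1),
        (-1 : ℤ) ^ i * (Nat.choose X (2 * i) : ℤ) *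
          (Nat.doubleFactorial (2 * i - 1) : ℤ) * XiZ 0 Y (S - i) := by
  rw [xiZ_eq_Fe X Y hXY S, Fe]
  refine (Finset.sum_subset ?_ ?_).symm
  · intro i hi
    simp only [Finset.mem_range] at hi ⊢
    omega
  · intro i hi hni
    simp only [Finset.mem_range] at hi hni
    have hX : X < 2 * i := by omega
    rw [Nat.choose_eq_zero_of_lt hX]
    simp
end

section
/- In the Young–Fibonacci graph, for any vertex y (a word over {1,2}), the set of children of y (covers of y from above obtained by the two operations: replace the leftmost 1 by 2, or insert a 1 to the left of the leftmost 1) equals the set of parents of the word 2y (covers of 2y from below). -/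
/-- Index of the leftmost `1` in a word (equals the length if there is no `1`). -/
def firstOnePos (w : List ℕ) : ℕ := w.findIdx (fun d => d == 1)

/-- The vertices covering `y` in the Young–Fibonacci graph: insert a `1` anywhere to the
left of the leftmost `1`, or replace the leftmost `1` by a `2`. -/
def children (y : List ℕ) : Set (List ℕ) :=
  {u | (∃ j, j ≤ firstOnePos y ∧ j ≤ y.length ∧ u = y.take j ++ 1 :: y.drop j) ∨
       (firstOnePos y < y.length ∧ u = y.set (firstOnePos y) 2)}

/-- The vertices covered by `w` in the Young–Fibonacci graph: replace one of the `2`s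
preceding the first `1` by a `1`, or delete the first `1`. -/
def parents (w : List ℕ) : Set (List ℕ) :=
  {u | (∃ j, j < firstOnePos w ∧ u = w.set j 1) ∨
       (firstOnePos w < w.length ∧
         u = w.take (firstOnePos w) ++ w.drop (firstOnePos w + 1))}

lemma firstOnePos_cons_two (y : List ℕ) : firstOnePos (2 :: y) = firstOnePos y + 1 := by
  simp [firstOnePos, List.findIdx_cons]

lemma lemA : ∀ (j : ℕ) (y : List ℕ), j ≤ y.length → (∀ i, i < j → y.getD i 0 = 2) →
    (2 :: y).set j 1 = y.take j ++ 1 :: y.drop j := by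
  intro j
  induction j with
  | zero => intro y _ _; simp
  | succ j ih =>
    intro y hl h2
    match y with
    | a :: t =>
      have ha : a = 2 := by simpa using h2 0 (Nat.succ_pos _)
      subst ha
      have := ih t (Nat.le_of_succ_le_succ hl)
        (fun i hi => by simpa using h2 (i+1) (Nat.succ_lt_succ hi))
      simp only [List.set_cons_succ, List.take_succ_cons, List.drop_succ_cons, List.cons_append]
      rw [← this]

lemma lemB : ∀ (p : ℕ) (y : List ℕ), p < y.length → (∀ i, i < p → y.getD i 0 = 2) →
    y.set p 2 = 2 :: (y.take p ++ y.drop (p + 1)) := by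
  intro p
  induction p with
  | zero =>
    intro y hl _
    match y with
    | a :: t => simp
  | succ p ih =>
    intro y hl h2
    match y with
    | a :: t =>
      have ha : a = 2 := by simpa using h2 0 (Nat.succ_pos _)
      subst ha
      have := ih t (Nat.lt_of_succ_lt_succ hl)
        (fun i hi => by simpa using h2 (i+1) (Nat.succ_lt_succ hi))
      simp only [List.set_cons_succ, List.take_succ_cons, List.drop_succ_cons, List.cons_append]
      rw [this]

theorem stmt17 (y : List ℕ) (hy : ∀ d ∈ y, d = 1 ∨ d = 2) :
    children y = parents (2 :: y) := by
  have hp2 : ∀ i, i < firstOnePos y → y.getD i 0 = 2 := by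
    intro i h
    have hil : i < y.length := h.trans_le List.findIdx_le_length
    have hne : (fun d => d == 1) (y[i]'hil) = false := List.not_of_lt_findIdx h
    have hne' : y[i]'hil ≠ 1 := by simpa using hne
    rcases hy (y[i]'hil) (List.getElem_mem _) with h1 | h1
    · exact absurd h1 hne'
    · rw [List.getD_eq_getElem _ _ hil, h1]
  ext u
  simp only [children, parents, Set.mem_setOf_eq, firstOnePos_cons_two]
  constructor
  · rintro (⟨j, hj, hjl, rfl⟩ | ⟨hlt, rfl⟩)
    · left
      exact ⟨j, Nat.lt_succ_of_le hj, (lemA j y hjl fun i hi => hp2 i (hi.trans_le hj)).symm⟩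
    · right
      refine ⟨by simpa using Nat.succ_lt_succ hlt, ?_⟩
      rw [lemB _ y hlt (fun i hi => hp2 i hi)]
      simp
  · rintro (⟨j, hj, rfl⟩ | ⟨hlt, rfl⟩)
    · left
      have hj' : j ≤ firstOnePos y := Nat.lt_succ_iff.mp hj
      have hjl : j ≤ y.length := hj'.trans List.findIdx_le_length
      exact ⟨j, hj', hjl, lemA j y hjl fun i hi => hp2 i (hi.trans_le hj')⟩
    · right
      have hlt' : firstOnePos y < y.length := by
        simpa using Nat.lt_of_succ_lt_succ (by simpa using hlt)
      refine ⟨hlt', ?_⟩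
      rw [lemB _ y hlt' (fun i hi => hp2 i hi)]
      simp
end

section
/- In the Young–Fibonacci graph, the number of saturated downward paths from a word x (over alphabet {1,2}) to the empty word ε equals ∏_{j=1}^{d(x)} g(x,j), where d(x) is the number of 2s in x and, writing x = 1^{β_{d(x)}} 2 1^{β_{d(x)−1}} 2 ⋯ 2 1^{β_0}, we set g(x,j) = β_0 + β_1 + ⋯ + β_{j−1} + 2j − 1. -/
def Word (x : List ℕ) : Prop := ∀ d ∈ x, d = 1 ∨ d = 2

lemma fop_le (w : List ℕ) : firstOnePos w ≤ w.length := List.findIdx_le_length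

lemma ne_one_of_lt_fop {w : List ℕ} {i : ℕ} (h : i < firstOnePos w) (hi : i < w.length) :
    w[i] ≠ 1 := by
  have := List.not_of_lt_findIdx (p := fun d => d == 1) (xs := w) h
  simpa using this

lemma getElem_fop {w : List ℕ} (h : firstOnePos w < w.length) : w[firstOnePos w] = 1 := by
  have := @List.findIdx_getElem _ (fun d => d == 1) w h
  exact beq_iff_eq.mp this

lemma le_fop {w : List ℕ} {q : ℕ} (hq : q ≤ w.length)
    (h : ∀ i (_ : i < w.length), i < q → w[i] ≠ 1) : q ≤ firstOnePos w := by
  by_contra hc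
  push_neg at hc
  have hlt : firstOnePos w < w.length := lt_of_lt_of_le hc hq
  exact h _ hlt hc (getElem_fop hlt)

lemma fop_eq {w : List ℕ} {q : ℕ} (hq : q < w.length) (h1 : w[q] = 1)
    (h0 : ∀ i (_ : i < w.length), i < q → w[i] ≠ 1) : firstOnePos w = q := by
  rw [firstOnePos, List.findIdx_eq hq]
  refine ⟨by simpa using h1, fun j hj => by simpa using h0 j (hj.trans hq) hj⟩

lemma set_own {v : ℕ} (l : List ℕ) (n : ℕ) (h : n < l.length) (hv : l[n] = v) :
    l.set n v = l := by
  apply List.ext_getElem (by simp)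
  intro i h1 h2
  rw [List.getElem_set]
  split
  · next heq => subst heq; exact hv.symm ▸ rfl
  · rfl

lemma mem_children_iff {x : List ℕ} (y : List ℕ) (hx : Word x) :
    x ∈ children y ↔ y ∈ parents x := by
  constructor
  · rintro (⟨j, hj1, hj2, rfl⟩ | ⟨hlt, rfl⟩)
    · -- insertion: x = y.take j ++ 1 :: y.drop j
      set A := y.take j with hA
      have hAlen : A.length = j := by simp [hA, hj2]
      have hfop : firstOnePos (A ++ 1 :: y.drop j) = j := by
        rw [firstOnePos, List.findIdx_append]
        have hfA : List.findIdx (fun d => d == 1) A = A.length := by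
          rw [List.findIdx_eq_length]
          intro a ha
          obtain ⟨i, hi, rfl⟩ := List.mem_iff_getElem.1 ha
          have hij : i < j := by omega
          have : A[i] = y[i]'(by omega) := by simp [hA, List.getElem_take]
          rw [this]
          simpa using ne_one_of_lt_fop (lt_of_lt_of_le hij hj1) (by omega)
        rw [hfA, if_neg (lt_irrefl _), List.findIdx_cons]
        simp [hAlen]
      refine Or.inr ⟨?_, ?_⟩
      · rw [hfop]; simp; omega
      · rw [hfop]
        have h1 : (A ++ 1 :: y.drop j).take j = A := by
          rw [← hAlen, List.take_left]
        have h2 : (A ++ 1 :: y.drop j).drop (j + 1) = y.drop j := by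
          rw [← hAlen]
          rw [List.drop_append]
          simp
        rw [h1, h2, hA, List.take_append_drop]
    · -- replacement: x = y.set (firstOnePos y) 2
      set q := firstOnePos y with hq
      have hxlen : (y.set q 2).length = y.length := by simp
      refine Or.inl ⟨q, ?_, ?_⟩
      · have : q + 1 ≤ firstOnePos (y.set q 2) := by
          apply le_fop (by omega)
          intro i hi hiq
          rcases Nat.lt_or_ge i q with h | h
          · rw [List.getElem_set_ne (by omega)]
            exact ne_one_of_lt_fop h (by omega)
          · have : i = q := by omega
            subst this
            rw [List.getElem_set_self]
            omega
        omega
      · rw [List.set_set]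
        exact (set_own y q hlt (getElem_fop hlt)).symm
  · rintro (⟨j, hj, rfl⟩ | ⟨hlt, rfl⟩)
    · -- y = x.set j 1
      have hjl : j < x.length := lt_of_lt_of_le hj (fop_le x)
      have hx2 : x[j] = 2 := (hx _ (List.getElem_mem _)).resolve_left (ne_one_of_lt_fop hj hjl)
      have hfop : firstOnePos (x.set j 1) = j := by
        apply fop_eq (by simpa using hjl) (by rw [List.getElem_set_self])
        intro i hi hij
        rw [List.getElem_set_ne (by omega)]
        exact ne_one_of_lt_fop (hij.trans hj) (by simpa using hi)
      refine Or.inr ⟨by rw [hfop]; simpa using hjl, ?_⟩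
      rw [hfop, List.set_set]
      exact (set_own x j hjl hx2).symm
    · -- y = x.take p ++ x.drop (p+1)
      set p := firstOnePos x with hp
      set A := x.take p with hA
      have hAlen : A.length = p := by simp [hA]; omega
      have hylen : (A ++ x.drop (p + 1)).length = x.length - 1 := by
        simp [hAlen]; omega
      have hfge : p ≤ firstOnePos (A ++ x.drop (p + 1)) := by
        apply le_fop (by omega)
        intro i hi hiq
        rw [List.getElem_append_left (by omega)]
        have : A[i]'(by omega) = x[i]'(by omega) := by simp [hA, List.getElem_take]
        rw [this]
        exact ne_one_of_lt_fop hiq (by omega)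
      refine Or.inl ⟨p, hfge, by omega, ?_⟩
      have h1 : (A ++ x.drop (p + 1)).take p = A := by rw [← hAlen, List.take_left]
      have h2 : (A ++ x.drop (p + 1)).drop p = x.drop (p + 1) := by
        rw [← hAlen, List.drop_left]
      rw [h1, h2]
      conv_lhs => rw [← List.take_append_drop p x]
      rw [List.drop_eq_getElem_cons hlt, getElem_fop hlt]

def parentsList (w : List ℕ) : List (List ℕ) :=
  ((List.range (firstOnePos w)).map (fun j => w.set j 1)) ++
  (if firstOnePos w < w.length then
     [w.take (firstOnePos w) ++ w.drop (firstOnePos w + 1)] else [])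

lemma mem_parentsList {x y : List ℕ} : y ∈ parentsList x ↔ y ∈ parents x := by
  unfold parentsList parents
  rw [List.mem_append, List.mem_map]
  constructor
  · rintro (⟨j, hj, rfl⟩ | h)
    · exact Or.inl ⟨j, List.mem_range.1 hj, rfl⟩
    · split_ifs at h with hc
      · simp only [List.mem_singleton] at h
        exact Or.inr ⟨hc, h⟩
      · simp at h
  · rintro (⟨j, hj, rfl⟩ | ⟨hc, rfl⟩)
    · exact Or.inl ⟨j, List.mem_range.2 hj, rfl⟩
    · refine Or.inr ?_
      rw [if_pos hc]
      simp

lemma nodup_parentsList (x : List ℕ) : (parentsList x).Nodup := by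
  unfold parentsList
  apply List.Nodup.append
  · refine List.Nodup.map_on ?_ (List.nodup_range)
    intro j hj j' hj' heq
    rw [List.mem_range] at hj hj'
    by_contra hne
    have hjl : j < x.length := lt_of_lt_of_le hj (fop_le x)
    have hjl' : j' < x.length := lt_of_lt_of_le hj' (fop_le x)
    have h1 := congrArg (fun l => l[j']?) heq
    simp [List.getElem?_set, hne, hjl'] at h1
    exact ne_one_of_lt_fop hj' hjl' h1
  · split_ifs <;> simp
  · intro a ha hb
    rw [List.mem_map] at ha
    obtain ⟨j, hj, rfl⟩ := ha
    split_ifs at hb with hc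
    · simp only [List.mem_singleton] at hb
      have h1 : (x.set j 1).length = x.length := by simp
      have h2 : (x.take (firstOnePos x) ++ x.drop (firstOnePos x + 1)).length
          = x.length - 1 := by
        simp [List.length_take, List.length_drop]; omega
      rw [hb, h2] at h1
      omega
    · simp at hb

lemma word_of_mem_parentsList {x y : List ℕ} (hx : Word x) (h : y ∈ parentsList x) :
    Word y := by
  unfold parentsList at h
  rw [List.mem_append, List.mem_map] at h
  rcases h with ⟨j, _, rfl⟩ | h
  · intro d hd
    rcases List.mem_or_eq_of_mem_set hd with h' | h'
    · exact hx d h'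
    · exact Or.inl h'
  · split_ifs at h with hc
    · simp only [List.mem_singleton] at h
      subst h
      intro d hd
      rcases List.mem_append.1 hd with h' | h'
      · exact hx d (List.mem_of_mem_take h')
      · exact hx d (List.mem_of_mem_drop h')
    · simp at h

lemma sum_of_mem_parentsList {x y : List ℕ} (hx : Word x) (h : y ∈ parentsList x) :
    y.sum + 1 = x.sum := by
  have hsum : ∀ i (hi : i < x.length), x[i] + (x.take i).sum + (x.drop (i+1)).sum = x.sum := by
    intro i hi
    have := List.sum_take_add_sum_drop x i
    rw [List.drop_eq_getElem_cons hi] at this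
    simp only [List.sum_cons] at this
    omega
  unfold parentsList at h
  rw [List.mem_append, List.mem_map] at h
  rcases h with ⟨j, hj, rfl⟩ | h
  · rw [List.mem_range] at hj
    have hjl : j < x.length := lt_of_lt_of_le hj (fop_le x)
    have hx2 : x[j] = 2 := (hx _ (List.getElem_mem _)).resolve_left (ne_one_of_lt_fop hj hjl)
    rw [List.sum_set]
    rw [if_pos hjl]
    have := hsum j hjl
    omega
  · split_ifs at h with hc
    · simp only [List.mem_singleton] at h
      subst h
      rw [List.sum_append]
      have := hsum _ hc
      rw [getElem_fop hc] at this
      omega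
    · simp at h

lemma getLast?_cons_ne {α : Type*} {a : α} {Q : List α} (h : Q ≠ []) :
    (a :: Q).getLast? = Q.getLast? := by
  cases Q with
  | nil => exact absurd rfl h
  | cons b t => rw [List.getLast?_cons_cons]

def chainsList : ℕ → List ℕ → List (List (List ℕ))
  | 0, x => if x = [] then [[[]]] else []
  | n+1, x => (parentsList x).flatMap (fun y => (chainsList n y).map (fun Q => x :: Q))

lemma mem_chainsList {n : ℕ} {x : List ℕ} {P : List (List ℕ)} (hx : Word x) :
    P ∈ chainsList n x ↔ (P.head? = some x ∧ P.getLast? = some ([] : List ℕ) ∧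
      P.length = n + 1 ∧ P.Chain' (fun a b => a ∈ children b)) := by
  induction n generalizing x P with
  | zero =>
    rw [chainsList]
    split_ifs with h
    · subst h
      constructor
      · intro hP
        simp only [List.mem_singleton] at hP
        subst hP
        simp
        exact List.isChain_singleton _
      · rintro ⟨h1, h2, h3, _⟩
        match P, h3 with
        | [a], _ =>
          simp only [List.head?_cons, Option.some_inj] at h1
          simp [h1]
    · constructor
      · intro hP; simp at hP
      · rintro ⟨h1, h2, h3, _⟩
        match P, h3 with
        | [a], _ =>
          simp only [List.head?_cons, Option.some_inj] at h1
          simp only [List.getLast?_singleton, Option.some_inj] at h2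
          exact absurd (h1 ▸ h2.symm ▸ rfl : x = []) h
  | succ n ih =>
    rw [chainsList, List.mem_flatMap]
    constructor
    · rintro ⟨y, hy, hP⟩
      rw [List.mem_map] at hP
      obtain ⟨Q, hQ, rfl⟩ := hP
      have hyw := word_of_mem_parentsList hx hy
      obtain ⟨h1, h2, h3, h4⟩ := (ih hyw).1 hQ
      have hQne : Q ≠ [] := by rintro rfl; simp at h1
      refine ⟨rfl, ?_, by simp [h3], ?_⟩
      · rwa [getLast?_cons_ne hQne]
      · rw [List.Chain', List.isChain_cons]
        refine ⟨?_, h4⟩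
        intro z hz
        rw [h1, Option.mem_some_iff] at hz
        rw [← hz]
        exact (mem_children_iff y hx).2 (mem_parentsList.1 hy)
    · rintro ⟨h1, h2, h3, h4⟩
      match P, h3 with
      | a :: Q, h3 =>
        simp only [List.head?_cons, Option.some_inj] at h1
        subst h1
        have hQlen : Q.length = n + 1 := by simpa using h3
        have hQne : Q ≠ [] := by rintro rfl; simp at hQlen
        obtain ⟨y, hy⟩ : ∃ y, Q.head? = some y := by
          cases Q with
          | nil => exact absurd rfl hQne
          | cons b t => exact ⟨b, rfl⟩
        rcases List.isChain_cons.1 h4 with ⟨hr, h4'⟩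
        have hxy : a ∈ children y := hr y hy
        have hyp : y ∈ parentsList a := mem_parentsList.2 ((mem_children_iff y hx).1 hxy)
        refine ⟨y, hyp, ?_⟩
        rw [List.mem_map]
        refine ⟨Q, (ih (word_of_mem_parentsList hx hyp)).2 ⟨hy, ?_, hQlen, h4'⟩, rfl⟩
        rwa [getLast?_cons_ne hQne] at h2

lemma nodup_chainsList (n : ℕ) (x : List ℕ) (hx : Word x) : (chainsList n x).Nodup := by
  induction n generalizing x with
  | zero =>
    rw [chainsList]
    split_ifs <;> simp
  | succ n ih =>
    rw [chainsList, List.nodup_flatMap]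
    constructor
    · intro y hy
      exact List.Nodup.map (fun a b h => by simpa using h)
        (ih y (word_of_mem_parentsList hx hy))
    · apply List.Pairwise.imp_of_mem ?_ (nodup_parentsList x)
      · intro y y' hy hy' hne
        intro P hP hP'
        rw [List.mem_map] at hP hP'
        obtain ⟨Q, hQ, rfl⟩ := hP
        obtain ⟨Q', hQ', heq⟩ := hP'
        have : Q = Q' := by simpa using heq.symm
        subst this
        have e1 := ((mem_chainsList (word_of_mem_parentsList hx hy)).1 hQ).1
        have e2 := ((mem_chainsList (word_of_mem_parentsList hx hy')).1 hQ').1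
        rw [e1] at e2
        exact hne (Option.some_inj.1 e2)
  
lemma card_eq (n : ℕ) (x : List ℕ) (hx : Word x) :
    Nat.card {P : List (List ℕ) // P.head? = some x ∧ P.getLast? = some ([] : List ℕ) ∧
      P.length = n + 1 ∧ P.Chain' (fun a b => a ∈ children b)} = (chainsList n x).length := by
  have e1 : {P : List (List ℕ) // P.head? = some x ∧ P.getLast? = some ([] : List ℕ) ∧
      P.length = n + 1 ∧ P.Chain' (fun a b => a ∈ children b)}
      ≃ {P // P ∈ (chainsList n x).toFinset} :=
    Equiv.subtypeEquivRight (fun P => by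
      rw [List.mem_toFinset, mem_chainsList hx])
  rw [Nat.card_congr e1, Nat.card_eq_finsetCard,
    List.toFinset_card_of_nodup (nodup_chainsList n x hx)]

lemma tb_append_left {m : ℕ} {l r : List ℕ} (h1 : 1 ≤ m) (h2 : m ≤ l.count 2) :
    takeBefore2 m (l ++ r) = takeBefore2 m l := by
  induction l generalizing m with
  | nil => simp at h2; omega
  | cons a t ih =>
    rw [List.count_cons] at h2
    by_cases ha : a = 2
    · subst ha
      rw [List.cons_append, takeBefore2, takeBefore2, if_pos rfl, if_pos rfl]
      by_cases hm : m ≤ 1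
      · rw [if_pos hm, if_pos hm]
      · rw [if_neg hm, if_neg hm, ih (by omega) (by simp at h2 ⊢; omega)]
    · rw [List.cons_append, takeBefore2, takeBefore2, if_neg ha, if_neg ha,
        ih h1 (by simp [ha] at h2 ⊢; omega)]

lemma tb_append_right {m : ℕ} {l r : List ℕ} (h : l.count 2 < m) :
    takeBefore2 m (l ++ r) = l ++ takeBefore2 (m - l.count 2) r := by
  induction l generalizing m with
  | nil => simp
  | cons a t ih =>
    rw [List.count_cons] at h
    by_cases ha : a = 2
    · subst ha
      simp only [beq_self_eq_true, if_pos] at h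
      have hm : ¬ m ≤ 1 := by omega
      rw [List.cons_append, takeBefore2, if_pos rfl, if_neg hm,
        ih (by omega), List.count_cons]
      simp only [beq_self_eq_true, if_pos]
      have : m - (t.count 2 + 1) = m - 1 - t.count 2 := by omega
      rw [this, List.cons_append]
    · have ha' : ¬ ((a : ℕ) == 2) = true := by simpa using ha
      rw [List.cons_append, takeBefore2, if_neg ha, ih (by simp [ha'] at h ⊢; omega),
        List.count_cons, if_neg ha', List.cons_append, Nat.add_zero]

lemma tb_replicate {m a : ℕ} (h1 : 1 ≤ m) (h2 : m ≤ a) :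
    takeBefore2 m (List.replicate a 2) = List.replicate (m - 1) 2 := by
  induction a generalizing m with
  | zero => omega
  | succ b ih =>
    rw [List.replicate_succ, takeBefore2, if_pos rfl]
    by_cases hm : m ≤ 1
    · have : m = 1 := by omega
      rw [if_pos hm, this]
      simp
    · rw [if_neg hm, ih (by omega) (by omega)]
      have : m - 1 = (m - 1 - 1) + 1 := by omega
      rw [this, List.replicate_succ, Nat.add_sub_cancel]

def G (x : List ℕ) : ℕ := ∏ j ∈ Finset.Icc 1 (x.count 2), gval x j

lemma Icc_prod (f : ℕ → ℕ) (N : ℕ) :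
    ∏ j ∈ Finset.Icc 1 N, f j = ∏ k ∈ Finset.range N, f (k + 1) := by
  induction N with
  | zero => simp
  | succ n ih =>
    rw [Finset.prod_range_succ, ← ih, ← Finset.prod_Icc_succ_top (by omega)]

lemma G_cons_one (t : List ℕ) : G (1 :: t) = G t := by
  have hc : (1 :: t).count 2 = t.count 2 := by simp [List.count_cons]
  rw [G, G, hc]
  apply Finset.prod_congr rfl
  intro j hj
  rw [Finset.mem_Icc] at hj
  rw [gval, gval, List.reverse_cons,
    tb_append_left hj.1 (by rw [List.count_reverse]; exact hj.2)]

lemma G_replicate_append (a : ℕ) (t : List ℕ) :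
    G (List.replicate a 2 ++ t) = G t * ∏ i ∈ Finset.range a, (t.sum + 2 * i + 1) := by
  have hc : (List.replicate a 2 ++ t).count 2 = t.count 2 + a := by
    simp [List.count_append, List.count_replicate]
    omega
  rw [G, Icc_prod, hc, Finset.prod_range_add]
  have hrev : (List.replicate a 2 ++ t).reverse = t.reverse ++ List.replicate a 2 := by
    rw [List.reverse_append, List.reverse_replicate]
  congr 1
  · rw [G, Icc_prod]
    apply Finset.prod_congr rfl
    intro k hk
    rw [Finset.mem_range] at hk
    rw [gval, gval, hrev, tb_append_left (by omega) (by rw [List.count_reverse]; omega)]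
  · apply Finset.prod_congr rfl
    intro i hi
    rw [Finset.mem_range] at hi
    rw [gval, hrev, tb_append_right (by rw [List.count_reverse]; omega)]
    rw [List.count_reverse]
    have h1 : t.count 2 + i + 1 - t.count 2 = i + 1 := by omega
    rw [h1, tb_replicate (by omega) (by omega)]
    rw [List.sum_append, List.sum_reverse, List.sum_replicate]
    simp only [Nat.add_sub_cancel, smul_eq_mul]
    omega

lemma arith (U p : ℕ) :
    (∑ j ∈ Finset.range p, (∏ i ∈ Finset.range (p - 1 - j), (U + 2 * i + 1)) *
        ∏ k ∈ Finset.range j, (U + 2 * (p - 1 - j) + 2 * k + 2))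
      + ∏ i ∈ Finset.range p, (U + 2 * i) = ∏ i ∈ Finset.range p, (U + 2 * i + 1) := by
  induction p with
  | zero => simp
  | succ p ih =>
    rw [Finset.sum_range_succ']
    have hterm0 : (∏ i ∈ Finset.range (p + 1 - 1 - 0), (U + 2 * i + 1)) *
        ∏ k ∈ Finset.range 0, (U + 2 * (p + 1 - 1 - 0) + 2 * k + 2)
        = ∏ i ∈ Finset.range p, (U + 2 * i + 1) := by
      simp
    have hstep : ∀ j ∈ Finset.range p,
        (∏ i ∈ Finset.range (p + 1 - 1 - (j + 1)), (U + 2 * i + 1)) *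
          ∏ k ∈ Finset.range (j + 1), (U + 2 * (p + 1 - 1 - (j + 1)) + 2 * k + 2)
        = ((∏ i ∈ Finset.range (p - 1 - j), (U + 2 * i + 1)) *
          ∏ k ∈ Finset.range j, (U + 2 * (p - 1 - j) + 2 * k + 2)) * (U + 2 * p) := by
      intro j hj
      rw [Finset.mem_range] at hj
      have e1 : p + 1 - 1 - (j + 1) = p - 1 - j := by omega
      rw [e1, Finset.prod_range_succ]
      have e2 : U + 2 * (p - 1 - j) + 2 * j + 2 = U + 2 * p := by omega
      rw [e2, mul_assoc]
    rw [Finset.sum_congr rfl hstep, hterm0, ← Finset.sum_mul,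
      Finset.prod_range_succ, Finset.prod_range_succ]
    have := ih
    nlinarith [ih]

lemma list_range_sum (f : ℕ → ℕ) (n : ℕ) :
    ((List.range n).map f).sum = ∑ j ∈ Finset.range n, f j := by
  induction n with
  | zero => simp
  | succ n ih =>
    rw [List.range_succ, List.map_append, List.sum_append, Finset.sum_range_succ, ih]
    simp

lemma parents_sum_G {x : List ℕ} (hx : Word x) (hne : x ≠ []) :
    ((parentsList x).map G).sum = G x := by
  set p := firstOnePos x with hp
  have hple : p ≤ x.length := fop_le x
  have hlen0 : 0 < x.length := List.length_pos_iff.2 hne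
  have htake : x.take p = List.replicate p 2 := by
    apply List.ext_getElem (by simp; omega)
    intro i h1 h2
    rw [List.getElem_take, List.getElem_replicate]
    have hi : i < p := by simp at h1; omega
    exact (hx _ (List.getElem_mem _)).resolve_left (ne_one_of_lt_fop hi (by omega))
  have hxeq : x = List.replicate p 2 ++ x.drop p := by
    conv_lhs => rw [← List.take_append_drop p x]
    rw [htake]
  set D := x.drop p with hD
  set U := D.sum with hU
  set A := G D with hA2
  have hGx : G x = A * ∏ i ∈ Finset.range p, (U + 2 * i + 1) := by
    conv_lhs => rw [hxeq]
    rw [G_replicate_append]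
  have hset : ∀ j, j < p → x.set j 1 =
      List.replicate j 2 ++ 1 :: (List.replicate (p - 1 - j) 2 ++ D) := by
    intro j hj
    conv_lhs => rw [hxeq]
    rw [List.set_append, if_pos (by simp [hj])]
    have hrepl : List.replicate p 2
        = List.replicate j 2 ++ 2 :: List.replicate (p - 1 - j) 2 := by
      have hpe : p = j + ((p - 1 - j) + 1) := by omega
      conv_lhs => rw [hpe]
      rw [List.replicate_add, List.replicate_succ]
    rw [hrepl, List.set_append, if_neg (by simp), List.length_replicate, Nat.sub_self]
    simp [List.set, List.append_assoc]
  have hGset : ∀ j, j < p → G (x.set j 1) =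
      A * ((∏ i ∈ Finset.range (p - 1 - j), (U + 2 * i + 1)) *
        ∏ k ∈ Finset.range j, (U + 2 * (p - 1 - j) + 2 * k + 2)) := by
    intro j hj
    rw [hset j hj, G_replicate_append, G_cons_one, G_replicate_append]
    have hs : (1 :: (List.replicate (p - 1 - j) 2 ++ D)).sum
        = U + 2 * (p - 1 - j) + 1 := by
      simp [List.sum_append, List.sum_replicate]
      omega
    rw [hs, mul_assoc, ← hU]
    congr 1
    congr 1
    apply Finset.prod_congr rfl
    intro k _
    ring
  have hifsum : ((if p < x.length then [x.take p ++ x.drop (p + 1)] else []).map G).sum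
      = A * ∏ i ∈ Finset.range p, (U + 2 * i) := by
    by_cases hc : p < x.length
    · rw [if_pos hc]
      have hDcons : D = 1 :: x.drop (p + 1) := by
        rw [hD, List.drop_eq_getElem_cons hc, getElem_fop hc]
      have hdel : x.take p ++ x.drop (p + 1) = List.replicate p 2 ++ x.drop (p + 1) := by
        rw [htake]
      have hUt : U = (x.drop (p + 1)).sum + 1 := by rw [hU, hDcons]; simp; omega
      have hAt : A = G (x.drop (p + 1)) := by rw [hA2, hDcons, G_cons_one]
      simp only [List.map_cons, List.map_nil, List.sum_cons, List.sum_nil, Nat.add_zero]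
      rw [hdel, G_replicate_append, ← hAt]
      congr 1
      apply Finset.prod_congr rfl
      intro i _
      omega
    · rw [if_neg hc]
      have hp0 : 0 < p := by omega
      have hD0 : D = [] := by rw [hD]; apply List.drop_eq_nil_of_le; omega
      have hU0 : U = 0 := by rw [hU, hD0]; rfl
      simp only [List.map_nil, List.sum_nil]
      rw [Finset.prod_eq_zero (Finset.mem_range.2 hp0) (by simp [hU0])]
      ring
  rw [parentsList, ← hp, List.map_append, List.sum_append]
  have hmap : (((List.range p).map (fun j => x.set j 1)).map G).sum
      = A * ∑ j ∈ Finset.range p, ((∏ i ∈ Finset.range (p - 1 - j), (U + 2 * i + 1)) *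
          ∏ k ∈ Finset.range j, (U + 2 * (p - 1 - j) + 2 * k + 2)) := by
    rw [List.map_map, list_range_sum, Finset.mul_sum]
    apply Finset.sum_congr rfl
    intro j hj
    exact hGset j (Finset.mem_range.1 hj)
  rw [hmap, hifsum, hGx, ← Nat.left_distrib, arith U p]

lemma main_count (n : ℕ) : ∀ x : List ℕ, Word x → x.sum = n →
    (chainsList n x).length = G x := by
  induction n with
  | zero =>
    intro x hx hs
    have hxe : x = [] := by
      cases x with
      | nil => rfl
      | cons a t =>
        rcases hx a (List.mem_cons_self) with h | h <;>
          simp [h, List.sum_cons] at hs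
    subst hxe
    rw [chainsList, if_pos rfl]
    simp [G]
  | succ n ih =>
    intro x hx hs
    have hne : x ≠ [] := by rintro rfl; simp at hs
    rw [chainsList, List.length_flatMap]
    have hcong : List.map (List.length ∘ fun y => (chainsList n y).map (fun Q => x :: Q))
        (parentsList x) = (parentsList x).map G := by
      apply List.map_congr_left
      intro y hy
      simp only [Function.comp_apply, List.length_map]
      exact ih y (word_of_mem_parentsList hx hy)
        (by have := sum_of_mem_parentsList hx hy; omega)
    simp only [Function.comp_def] at hcong
    rw [hcong, parents_sum_G hx hne]

theorem stmt18 (x : List ℕ) (hx : ∀ d ∈ x, d = 1 ∨ d = 2) :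
    Nat.card {P : List (List ℕ) //
        P.head? = some x ∧ P.getLast? = some ([] : List ℕ) ∧
        P.length = x.sum + 1 ∧
        P.Chain' (fun a b => a ∈ children b)} =
      ∏ j ∈ Finset.Icc 1 (x.count 2), gval x j := by
  rw [card_eq x.sum x hx, main_count x.sum x hx rfl]
  rfl
end
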